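/- Let ζ : 𝒬₀ → ℝ be generic in the sense that Σ_{v ∈ V'} ζ(v) ≠ 0 for every nonempty proper subset V' ⊊ 𝒬₀. Then for every f ∈ F_ζ, the support of f is a spanning subset of 𝒬₁: any two vertices of 𝒬 are connected by a path all of whose arrows lie in supp(f). -/

import Mathlib

/-!
Common framework: finite quivers, flows, boundaries, cycles, closures, the projection π,
and the solution polyhedra of the (generalised) transportation problem, following
Sardo Infirri, "Orbifold Singularities and McKay Flows".
-/

open Finset

/-- A (finite) quiver given by tail and head maps on a type of arrows. -/
structure FQuiver (V A : Type) where
  t : A → V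
  h : A → V

namespace FQuiver

variable {V A : Type}

/-- The boundary (net contribution) of a flow `f : A → R` at each vertex. -/
def boundary [Fintype A] [DecidableEq V] (Q : FQuiver V A) {R : Type} [AddCommGroup R]
    (f : A → R) : V → R := fun v =>
  (∑ a ∈ univ.filter (fun a => Q.h a = v), f a) -
  (∑ a ∈ univ.filter (fun a => Q.t a = v), f a)

/-- Source of a step (an arrow together with a direction of traversal). -/
def stepSrc (Q : FQuiver V A) (s : A × Bool) : V := if s.2 then Q.t s.1 else Q.h s.1

/-- Destination of a step. -/
def stepDst (Q : FQuiver V A) (s : A × Bool) : V := if s.2 then Q.h s.1 else Q.t s.1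

/-- A walk (path) from `v` to `v'` in the underlying undirected graph of the quiver:
a nonempty list of steps which compose, with consecutive arrows distinct. -/
def IsWalk (Q : FQuiver V A) (p : List (A × Bool)) (v v' : V) : Prop :=
  p ≠ [] ∧
  p.head?.map Q.stepSrc = some v ∧
  p.getLast?.map Q.stepDst = some v' ∧
  List.Chain' (fun s s' => Q.stepDst s = Q.stepSrc s') p ∧
  List.Chain' (fun s s' : A × Bool => s.1 ≠ s'.1) p

/-- A cycle: a closed walk. -/
def IsCycle (Q : FQuiver V A) (p : List (A × Bool)) : Prop := ∃ v, Q.IsWalk p v v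

end FQuiver

variable {V A : Type}

/-- The positive part of a walk/cycle: the arrows traversed in agreement with it. -/
def posArrows (p : List (A × Bool)) : Set A := {a | (a, true) ∈ p}

/-- The negative part of a walk/cycle: the arrows traversed against it. -/
def negArrows (p : List (A × Bool)) : Set A := {a | (a, false) ∈ p}

/-- The (integral) basic flow associated to a walk/cycle. -/
def basicFlowZ [DecidableEq A] (p : List (A × Bool)) : A → ℤ := fun a =>
  (p.count (a, true) : ℤ) - (p.count (a, false) : ℤ)

/-- The basic flow associated to a walk/cycle, as a real flow. -/
def basicFlow [DecidableEq A] (p : List (A × Bool)) : A → ℝ := fun a =>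
  (basicFlowZ p a : ℝ)

/-- The linear map induced by a typing map `π : A → Fin n` on flows. -/
def piMap [Fintype A] {n : ℕ} (π : A → Fin n) {R : Type} [AddCommMonoid R] (f : A → R) :
    Fin n → R := fun i => ∑ a ∈ univ.filter (fun a => π a = i), f a

/-- The support of a flow. -/
def fsupport (f : A → ℝ) : Set A := {a | f a ≠ 0}

/-- The polyhedron `F_ζ` of admissible (nonnegative) `ζ`-flows. -/
def Fpoly [Fintype A] [DecidableEq V] (Q : FQuiver V A) (ζ : V → ℝ) : Set (A → ℝ) :=
  {f | (∀ a, 0 ≤ f a) ∧ Q.boundary f = ζ}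

/-- A set of arrows contains a cycle. -/
def ContainsCycle (Q : FQuiver V A) (S : Set A) : Prop :=
  ∃ p : List (A × Bool), Q.IsCycle p ∧ ∀ s ∈ p, s.1 ∈ S

/-- A set of arrows is closed if, for every cycle of type zero, it contains the positive
part iff it contains the negative part. -/
def IsClosedConfig [Fintype A] [DecidableEq A] {n : ℕ} (Q : FQuiver V A) (π : A → Fin n)
    (T : Set A) : Prop :=
  ∀ p : List (A × Bool), Q.IsCycle p → piMap π (basicFlowZ p) = 0 →
    (posArrows p ⊆ T ↔ negArrows p ⊆ T)

/-- The closure `S̄` of a configuration: the smallest closed over-set. -/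
def confClosure [Fintype A] [DecidableEq A] {n : ℕ} (Q : FQuiver V A) (π : A → Fin n)
    (S : Set A) : Set A :=
  ⋂₀ {T | S ⊆ T ∧ IsClosedConfig Q π T}

/-- `Z₀(S)`: the space of flows with zero boundary vanishing outside `S`. -/
def Z0 [Fintype A] [DecidableEq V] (Q : FQuiver V A) (S : Set A) : Set (A → ℝ) :=
  {g | Q.boundary g = 0 ∧ ∀ a ∉ S, g a = 0}

/-- `F₀(S)`: the cone of flows with zero boundary which are nonnegative outside `S`. -/
def F0cone [Fintype A] [DecidableEq V] (Q : FQuiver V A) (S : Set A) : Set (A → ℝ) :=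
  {g | Q.boundary g = 0 ∧ ∀ a ∉ S, 0 ≤ g a}

/-- The rank of a configuration: the dimension of `span(π(Z₀(S̄)))`. -/
noncomputable def confRank [Fintype A] [DecidableEq A] [DecidableEq V] {n : ℕ} (Q : FQuiver V A)
    (π : A → Fin n) (S : Set A) : ℕ :=
  Module.finrank ℝ
    (Submodule.span ℝ ((fun g : A → ℝ => piMap π g) '' Z0 Q (confClosure Q π S)))

/-- The projected polyhedron `π(F_ζ) ⊆ ℝⁿ`. -/
def piImg [Fintype A] [DecidableEq V] {n : ℕ} (Q : FQuiver V A) (π : A → Fin n) (ζ : V → ℝ) :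
    Set (Fin n → ℝ) := (fun g : A → ℝ => piMap π g) '' Fpoly Q ζ

/-- The tangent cone `ℝ₊(P − x)` of a convex set at a point. -/
def polyTangentCone {E : Type} [AddCommGroup E] [Module ℝ E] (P : Set E) (x : E) : Set E :=
  {y | ∃ t : ℝ, 0 ≤ t ∧ ∃ p ∈ P, y = t • (p - x)}

/-- A face of a convex set: a convex extreme subset. -/
def IsFace {E : Type} [AddCommGroup E] [Module ℝ E] (P F : Set E) : Prop :=
  Convex ℝ F ∧ IsExtreme ℝ P F

/-- `Face_ζ(S)` computed from a flow `f`: `π(F_ζ) ∩ (π(f) + span(π(Z₀(S̄))))`. -/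
def faceOf [Fintype A] [DecidableEq A] [DecidableEq V] {n : ℕ} (Q : FQuiver V A)
    (π : A → Fin n) (ζ : V → ℝ) (S : Set A) (f : A → ℝ) : Set (Fin n → ℝ) :=
  piImg Q π ζ ∩
    {y | y - piMap π f ∈
      Submodule.span ℝ ((fun g : A → ℝ => piMap π g) '' Z0 Q (confClosure Q π S))}

/-- The McKay quiver of the cyclic action `1/r (w₁, …, w_n)`: vertices `ℤ/rℤ` and one
arrow `a_v^i : v → v − w_i` for each vertex `v` and each `i`. -/
def mckayQuiver (r n : ℕ) (w : Fin n → ZMod r) : FQuiver (ZMod r) (ZMod r × Fin n) where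
  t := fun a => a.1
  h := fun a => a.1 - w a.2

/-- The commutation flow `χ_v^i + χ_{v−w_i}^j − χ_v^j − χ_{v−w_j}^i`. -/
def commFlow (r n : ℕ) (w : Fin n → ZMod r) (v : ZMod r) (i j : Fin n) :
    ZMod r × Fin n → ℤ := fun a =>
  (if a = (v, i) then 1 else 0) + (if a = (v - w i, j) then 1 else 0)
    - (if a = (v, j) then 1 else 0) - (if a = (v - w j, i) then 1 else 0)

/-- `Λ²`: the subgroup of integral flows generated by the commutation flows. -/
def mckayLambda2 (r n : ℕ) (w : Fin n → ZMod r) : AddSubgroup (ZMod r × Fin n → ℤ) :=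
  AddSubgroup.closure {g | ∃ v i j, g = commFlow r n w v i j}


section Statement18Aux

variable {V A : Type}

/-- Reachability from `v` through arrows in the support of `f`. -/
inductive SuppReach (Q : FQuiver V A) (f : A → ℝ) (v : V) : V → Prop
  | base : SuppReach Q f v v
  | step {u : V} (s : A × Bool) : SuppReach Q f v u → f s.1 ≠ 0 → Q.stepSrc s = u →
      SuppReach Q f v (Q.stepDst s)

lemma head?_append_ne_nil {α : Type} {l : List α} (l' : List α) (h : l ≠ []) :
    (l ++ l').head? = l.head? := by
  cases l with
  | nil => exact absurd rfl h
  | cons x xs => simp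

lemma walk_single (Q : FQuiver V A) (s : A × Bool) :
    Q.IsWalk [s] (Q.stepSrc s) (Q.stepDst s) := by
  refine ⟨by simp, by simp, by simp, List.isChain_singleton _, List.isChain_singleton _⟩

lemma walk_append (Q : FQuiver V A) {p : List (A × Bool)} {v u : V} (s : A × Bool)
    (hp : Q.IsWalk p v u) (hs : Q.stepSrc s = u)
    (hne : ∀ l ∈ p.getLast?, l.1 ≠ s.1) :
    Q.IsWalk (p ++ [s]) v (Q.stepDst s) := by
  obtain ⟨h0, h1, h2, h3, h4⟩ := hp
  refine ⟨by simp, ?_, ?_, ?_, ?_⟩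
  · rw [head?_append_ne_nil _ h0]; exact h1
  · rw [List.getLast?_concat]; simp
  · unfold List.Chain'; rw [List.isChain_append]
    refine ⟨h3, List.isChain_singleton _, ?_⟩
    intro x hx y hy
    simp only [List.head?_cons, Option.mem_def, Option.some.injEq] at hy
    subst hy
    rw [hx] at h2
    simp only [Option.map_some, Option.some.injEq] at h2
    rw [h2, hs]
  · unfold List.Chain'; rw [List.isChain_append]
    exact ⟨h4, List.isChain_singleton _, fun x hx y hy => by
      simp only [List.head?_cons, Option.mem_def, Option.some.injEq] at hy
      subst hy; exact hne x hx⟩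

lemma walk_dropLast (Q : FQuiver V A) {q : List (A × Bool)} {v u : V} {s : A × Bool}
    (hp : Q.IsWalk (q ++ [s]) v u) (hq : q ≠ []) :
    Q.IsWalk q v (Q.stepSrc s) := by
  obtain ⟨h0, h1, h2, h3, h4⟩ := hp
  unfold List.Chain' at h3; rw [List.isChain_append] at h3
  unfold List.Chain' at h4; rw [List.isChain_append] at h4
  refine ⟨hq, ?_, ?_, h3.1, h4.1⟩
  · rw [head?_append_ne_nil _ hq] at h1; exact h1
  · have hl := List.getLast?_eq_getLast hq
    have := h3.2.2 (q.getLast hq) (by rw [hl]; rfl) s (by simp)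
    rw [hl]
    simp only [Option.map_some, Option.some.injEq]
    exact this

lemma suppReach_walk (Q : FQuiver V A) (f : A → ℝ) {v u : V} (h : SuppReach Q f v u) :
    u = v ∨ ∃ p : List (A × Bool), Q.IsWalk p v u ∧ ∀ s ∈ p, f s.1 ≠ 0 := by
  induction h with
  | base => exact Or.inl rfl
  | @step u s hr hfs hsrc ih =>
    rcases ih with rfl | ⟨p, hp, hsupp⟩
    · refine Or.inr ⟨[s], ?_, ?_⟩
      · rw [← hsrc]; exact walk_single Q s
      · intro x hx; simp at hx; subst hx; exact hfs
    · obtain ⟨h0, h1, h2, h3, h4⟩ := hp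
      have hl := List.getLast?_eq_getLast h0
      set l := p.getLast h0 with hldef
      by_cases hla : l.1 = s.1
      · by_cases hlb : l.2 = s.2
        · -- same step: dst s = dst l = u
          have hdu : Q.stepDst s = u := by
            have hls : l = s := Prod.ext hla hlb
            rw [← hls]
            have h2' := h2; rw [hl] at h2'
            simpa using h2'
          rw [hdu]
          exact Or.inr ⟨p, ⟨h0, h1, h2, h3, h4⟩, hsupp⟩
        · -- opposite direction: dst s = src l
          have hds : Q.stepDst s = Q.stepSrc l := by
            unfold FQuiver.stepDst FQuiver.stepSrc
            rcases Bool.eq_false_or_eq_true s.2 with hb | hb <;>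
              rcases Bool.eq_false_or_eq_true l.2 with hc | hc <;>
              simp [hb, hc, hla] at hlb ⊢
          rcases eq_or_ne p.dropLast [] with hd | hd
          · -- p = [l], so src l = v and dst s = v
            have hp1 : p = [l] := by
              conv_lhs => rw [← List.dropLast_append_getLast h0]
              rw [hd]; simp; exact hldef.symm
            have hsv : Q.stepSrc l = v := by
              rw [hp1] at h1; simpa using h1
            exact Or.inl (by rw [hds, hsv])
          · have hw : Q.IsWalk p.dropLast v (Q.stepSrc l) := by
              apply walk_dropLast Q (s := l)
              · rw [List.dropLast_append_getLast h0]; exact ⟨h0, h1, h2, h3, h4⟩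
              · exact hd
            rw [hds]
            exact Or.inr ⟨p.dropLast, hw, fun x hx => hsupp x (List.dropLast_subset _ hx)⟩
      · refine Or.inr ⟨p ++ [s], walk_append Q s ⟨h0, h1, h2, h3, h4⟩ hsrc ?_, ?_⟩
        · intro x hx
          rw [hl] at hx
          simp only [Option.mem_def, Option.some.injEq] at hx
          subst hx; exact hla
        · intro x hx
          rcases List.mem_append.mp hx with hx | hx
          · exact hsupp x hx
          · simp at hx; subst hx; exact hfs

end Statement18Aux

/-- If `ζ` is generic (no nonempty proper subset of vertices has zero
total weight), then the support of every `f ∈ F_ζ` is a spanning subset: any two distinct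
vertices are connected by a path all of whose arrows lie in `supp(f)`. -/
theorem statement18 {V A : Type} [Fintype V] [Fintype A] [DecidableEq V] [DecidableEq A]
    (Q : FQuiver V A) (ζ : V → ℝ)
    (hgen : ∀ V' : Finset V, V'.Nonempty → V' ≠ Finset.univ → ∑ v ∈ V', ζ v ≠ 0)
    (f : A → ℝ) (hf : f ∈ Fpoly Q ζ) :
    ∀ v v' : V, v ≠ v' →
      ∃ p : List (A × Bool), Q.IsWalk p v v' ∧ ∀ s ∈ p, s.1 ∈ fsupport f := by
  classical
  intro v v' hvv'
  -- closure of reachability under arrows in the support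
  have hclos : ∀ a : A, f a ≠ 0 →
      (SuppReach Q f v (Q.t a) ↔ SuppReach Q f v (Q.h a)) := by
    intro a ha
    constructor
    · intro h
      have := SuppReach.step (Q := Q) (f := f) (v := v) (a, true) h ha (by
        simp [FQuiver.stepSrc])
      simpa [FQuiver.stepDst] using this
    · intro h
      have := SuppReach.step (Q := Q) (f := f) (v := v) (a, false) h ha (by
        simp [FQuiver.stepSrc])
      simpa [FQuiver.stepDst] using this
  set V' : Finset V := univ.filter (SuppReach Q f v) with hV'
  have hvmem : v ∈ V' := by simp [hV', SuppReach.base]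
  -- the total boundary over V' vanishes
  have hsum : ∑ u ∈ V', ζ u = 0 := by
    have hb : ∀ u, ζ u = Q.boundary f u := fun u => (congrFun hf.2 u).symm
    calc ∑ u ∈ V', ζ u = ∑ u ∈ V', Q.boundary f u := Finset.sum_congr rfl fun u _ => hb u
      _ = (∑ u ∈ V', ∑ a ∈ univ.filter (fun a => Q.h a = u), f a)
          - (∑ u ∈ V', ∑ a ∈ univ.filter (fun a => Q.t a = u), f a) := by
            rw [← Finset.sum_sub_distrib]; rfl
      _ = (∑ a ∈ univ.filter (fun a => Q.h a ∈ V'), f a)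
          - (∑ a ∈ univ.filter (fun a => Q.t a ∈ V'), f a) := by
            rw [Finset.sum_fiberwise_eq_sum_filter, Finset.sum_fiberwise_eq_sum_filter]
      _ = 0 := by
            rw [Finset.sum_filter, Finset.sum_filter]
            rw [sub_eq_zero]
            apply Finset.sum_congr rfl
            intro a _
            by_cases ha : f a = 0
            · split_ifs <;> simp [ha]
            · have hiff : Q.h a ∈ V' ↔ Q.t a ∈ V' := by
                simp only [hV', Finset.mem_filter, Finset.mem_univ, true_and]
                exact (hclos a ha).symm
              split_ifs with h1 h2 h2
              · rfl
              · exact absurd (hiff.mp h1) h2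
              · exact absurd (hiff.mpr h2) h1
              · rfl
  -- genericity forces V' = univ
  have hv' : SuppReach Q f v v' := by
    by_contra hcon
    have hne : V' ≠ Finset.univ := by
      intro h
      have : v' ∈ V' := h ▸ Finset.mem_univ v'
      simp only [hV', Finset.mem_filter] at this
      exact hcon this.2
    exact hgen V' ⟨v, hvmem⟩ hne hsum
  rcases suppReach_walk Q f hv' with rfl | ⟨p, hp, hsupp⟩
  · exact absurd rfl hvv'.symm
  · exact ⟨p, hp, fun s hs => hsupp s hs⟩
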